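/- Let N ⊆ M be a finite-index II₁ factor inclusion with basis {λᵢ : 1 ≤ i ≤ n}. Suppose P is a II₁ factor containing M and a projection f ∈ P with Σᵢ λᵢ* f λᵢ = 1, fxf = E_N(x)f for all x ∈ M, and {τ^{-1/2} f λᵢ} a basis for P/M. Then there is an isomorphism from M₁ = ⟨M, e₁⟩ onto P which is the identity on M and maps e₁ to f. -/
import Mathlib


/- STATEMENT 12: Let N ⊆ M be a finite-index II₁ factor inclusion with basis
{λᵢ : 1 ≤ i ≤ n}.  Suppose P is a II₁ factor containing M and a projection f ∈ P with
Σᵢ λᵢ* f λᵢ = 1, fxf = E_N(x)f for all x ∈ M, and {τ^{-1/2} f λᵢ} a basis for P/M.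
Then there is an isomorphism from M₁ = ⟨M, e₁⟩ onto P which is the identity on M and
maps e₁ to f.

M₁ and P are modelled as star algebras with injective unital *-embeddings ι : M → M₁
and κ : M → P.  "Basis for M/N" means x = Σᵢ E_N(xλᵢ*)λᵢ; "{τ^{-1/2} f λᵢ} is a basis
for P/M" is phrased via the trace-preserving conditional expectation E_M : P → M.
Factoriality (II₁ factor) of M₁ is reflected by simplicity. -/
theorem stmt12 {M M₁ P : Type*}
    [Ring M] [StarRing M] [Algebra ℂ M] [StarModule ℂ M]
    [Ring M₁] [StarRing M₁] [Algebra ℂ M₁] [StarModule ℂ M₁]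
    [Ring P] [StarRing P] [Algebra ℂ P] [StarModule ℂ P]
    (hsimple : IsSimpleRing M₁)
    (N : StarSubalgebra ℂ M)
    (EN : M →ₗ[ℂ] M)
    (hENmem : ∀ x : M, EN x ∈ N) (hENfix : ∀ x ∈ N, EN x = x)
    (hENbim : ∀ a ∈ N, ∀ b ∈ N, ∀ x : M, EN (a * x * b) = a * EN x * b)
    (hENstar : ∀ x : M, EN (star x) = star (EN x))
    (τ : ℝ) (hτ : 0 < τ)
    (n : ℕ) (l : Fin n → M)
    (hbasis : ∀ x : M, x = ∑ i, EN (x * star (l i)) * l i)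
    -- the basic construction M₁ = ⟨M, e₁⟩
    (ι : M →⋆ₐ[ℂ] M₁) (hι : Function.Injective ι)
    (e₁ : M₁) (heproj : e₁ * e₁ = e₁) (hestar : star e₁ = e₁)
    (hjones : ∀ x : M, e₁ * ι x * e₁ = ι (EN x) * e₁)
    (hgen : Algebra.adjoin ℂ (insert e₁ (Set.range ι)) = ⊤)
    (hsep : ∀ x : M, ι x * e₁ = 0 → x = 0)
    -- the algebra P containing M and the projection f
    (κ : M →⋆ₐ[ℂ] P) (hκ : Function.Injective κ)
    (f : P) (hfproj : f * f = f) (hfstar : star f = f)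
    (hsum : ∑ i, star (κ (l i)) * f * κ (l i) = 1)
    (hfMf : ∀ x : M, f * κ x * f = κ (EN x) * f)
    (EPM : P →ₗ[ℂ] M) (hEPMfix : ∀ x : M, EPM (κ x) = x)
    (hPbasis : ∀ z : P, z = ∑ i,
      κ (EPM (z * star (((((Real.sqrt τ)⁻¹ : ℝ) : ℂ)) • (f * κ (l i))))) *
        (((((Real.sqrt τ)⁻¹ : ℝ) : ℂ)) • (f * κ (l i)))) :
    ∃ φ : M₁ ≃⋆ₐ[ℂ] P, (∀ x : M, φ (ι x) = κ x) ∧ φ e₁ = f := by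
  haveI := hsimple
  -- the star-flipped basis expansion in M
  have hbasis' : ∀ x : M, ∑ i, star (l i) * EN (l i * x) = x := by
    intro x
    calc ∑ i, star (l i) * EN (l i * x)
        = ∑ i, star (EN (star x * star (l i)) * l i) := by
          refine Finset.sum_congr rfl fun i _ => ?_
          rw [star_mul, ← hENstar, star_mul, star_star, star_star]
      _ = star (∑ i, EN (star x * star (l i)) * l i) := (star_sum _ _).symm
      _ = star (star x) := by rw [← hbasis (star x)]
      _ = x := star_star x
  -- every element of M₁ compresses against e₁
  have Qtotal : ∀ m : M₁, ∀ a : M, ∃ c : M, m * ι a * e₁ = ι c * e₁ := by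
    intro m
    have hm : m ∈ Algebra.adjoin ℂ (insert e₁ (Set.range ι)) := by
      rw [hgen]; exact Algebra.mem_top
    induction hm using Algebra.adjoin_induction with
    | mem x hx =>
        intro a
        rcases Set.mem_insert_iff.mp hx with rfl | ⟨y, rfl⟩
        · exact ⟨EN a, hjones a⟩
        · exact ⟨y * a, by rw [← map_mul ι]⟩
    | algebraMap r =>
        intro a
        refine ⟨r • a, ?_⟩
        rw [Algebra.algebraMap_eq_smul_one, map_smul ι, smul_mul_assoc, smul_mul_assoc,
          one_mul, smul_mul_assoc]
    | add x y hx hy ihx ihy =>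
        intro a
        obtain ⟨c, hc⟩ := ihx a
        obtain ⟨d, hd⟩ := ihy a
        exact ⟨c + d, by rw [add_mul, add_mul, hc, hd, map_add ι, add_mul]⟩
    | mul x y hx hy ihx ihy =>
        intro a
        obtain ⟨d, hd⟩ := ihy a
        obtain ⟨c, hc⟩ := ihx d
        refine ⟨c, ?_⟩
        have h1 : x * y * ι a * e₁ = x * (y * ι a * e₁) := by simp only [mul_assoc]
        have h2 : x * (ι d * e₁) = x * ι d * e₁ := by simp only [mul_assoc]
        rw [h1, hd, h2, hc]
  choose q hq using Qtotal
  have quniq : ∀ (m : M₁) (a c : M), m * ι a * e₁ = ι c * e₁ → q m a = c := by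
    intro m a c h
    have h2 : ι (q m a - c) * e₁ = 0 := by
      rw [map_sub ι, sub_mul, ← hq m a, h, sub_self]
    exact sub_eq_zero.mp (hsep _ h2)
  -- the key identity:  (∑ λᵢ* e₁ λᵢ) ⬝ (ι x e₁) = ι x e₁
  have hL2 : ∀ x : M, (∑ i, ι (star (l i)) * e₁ * ι (l i)) * (ι x * e₁) = ι x * e₁ := by
    intro x
    have t : ∀ i : Fin n, ι (star (l i)) * e₁ * ι (l i) * (ι x * e₁)
        = ι (star (l i) * EN (l i * x)) * e₁ := by
      intro i
      calc ι (star (l i)) * e₁ * ι (l i) * (ι x * e₁)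
          = ι (star (l i)) * (e₁ * ι (l i * x) * e₁) := by
            rw [map_mul ι]; simp only [mul_assoc]
        _ = ι (star (l i)) * (ι (EN (l i * x)) * e₁) := by rw [hjones]
        _ = ι (star (l i) * EN (l i * x)) * e₁ := by rw [map_mul ι, mul_assoc]
    rw [Finset.sum_mul]
    calc ∑ i, ι (star (l i)) * e₁ * ι (l i) * (ι x * e₁)
        = ∑ i, ι (star (l i) * EN (l i * x)) * e₁ := Finset.sum_congr rfl fun i _ => t i
      _ = ι (∑ i, star (l i) * EN (l i * x)) * e₁ := by rw [map_sum ι, Finset.sum_mul]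
      _ = ι x * e₁ := by rw [hbasis' x]
  -- computation rules for q
  have hq_ι : ∀ x a : M, q (ι x) a = x * a := fun x a => quniq _ _ _ (by rw [← map_mul ι])
  have hq_e : ∀ a : M, q e₁ a = EN a := fun a => quniq _ _ _ (hjones a)
  have hq_one : ∀ a : M, q 1 a = a := fun a => quniq _ _ _ (by rw [one_mul])
  have hq_zero : ∀ a : M, q 0 a = 0 := fun a =>
    quniq _ _ _ (by rw [zero_mul, zero_mul, map_zero ι, zero_mul])
  have hq_add : ∀ (m m' : M₁) (a : M), q (m + m') a = q m a + q m' a := fun m m' a =>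
    quniq _ _ _ (by rw [add_mul, add_mul, hq, hq, map_add ι, add_mul])
  have hq_smul : ∀ (r : ℂ) (m : M₁) (a : M), q (r • m) a = r • q m a := fun r m a =>
    quniq _ _ _ (by rw [smul_mul_assoc, smul_mul_assoc, hq, map_smul ι, smul_mul_assoc])
  have hq_mul : ∀ (m m' : M₁) (a : M),
      q (m * m') a = ∑ i, q m (star (l i)) * EN (l i * q m' a) := by
    intro m m' a
    refine quniq _ _ _ ?_
    have t : ∀ i : Fin n, m * (ι (star (l i)) * e₁ * ι (l i) * (ι (q m' a) * e₁))
        = ι (q m (star (l i)) * EN (l i * q m' a)) * e₁ := by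
      intro i
      calc m * (ι (star (l i)) * e₁ * ι (l i) * (ι (q m' a) * e₁))
          = m * ι (star (l i)) * e₁ * (ι (l i) * ι (q m' a) * e₁) := by
            simp only [mul_assoc]
        _ = ι (q m (star (l i))) * e₁ * (ι (l i) * ι (q m' a) * e₁) := by rw [hq]
        _ = ι (q m (star (l i))) * (e₁ * ι (l i * q m' a) * e₁) := by
            rw [map_mul ι]; simp only [mul_assoc]
        _ = ι (q m (star (l i))) * (ι (EN (l i * q m' a)) * e₁) := by rw [hjones]
        _ = ι (q m (star (l i)) * EN (l i * q m' a)) * e₁ := by rw [map_mul ι, mul_assoc]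
    have h1 : m * m' * ι a * e₁ = m * (m' * ι a * e₁) := by simp only [mul_assoc]
    calc m * m' * ι a * e₁
        = m * (ι (q m' a) * e₁) := by rw [h1, hq m' a]
      _ = m * ((∑ i, ι (star (l i)) * e₁ * ι (l i)) * (ι (q m' a) * e₁)) := by rw [hL2]
      _ = ∑ i, m * (ι (star (l i)) * e₁ * ι (l i) * (ι (q m' a) * e₁)) := by
          rw [Finset.sum_mul, Finset.mul_sum]
      _ = ∑ i, ι (q m (star (l i)) * EN (l i * q m' a)) * e₁ :=
          Finset.sum_congr rfl fun i _ => t i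
      _ = ι (∑ i, q m (star (l i)) * EN (l i * q m' a)) * e₁ := by
          rw [map_sum ι, Finset.sum_mul]
  have hstaru : star (∑ i, ι (star (l i)) * e₁ * ι (l i))
      = ∑ i, ι (star (l i)) * e₁ * ι (l i) := by
    rw [star_sum]
    refine Finset.sum_congr rfl fun i _ => ?_
    simp only [star_mul, ← map_star ι, hestar, star_star, mul_assoc]
  have hq_star : ∀ (m : M₁) (j : Fin n), q (star m) (star (l j))
      = ∑ i, star (l i) * EN (star (q m (star (l i))) * star (l j)) := by
    intro m j
    refine quniq _ _ _ ?_
    have key : ι (∑ i, star (l i) * EN (star (q m (star (l i))) * star (l j))) * e₁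
        = star m * ι (star (l j)) * e₁ := by
      calc ι (∑ i, star (l i) * EN (star (q m (star (l i))) * star (l j))) * e₁
          = ∑ i, ι (star (l i)) * (e₁ * ι (star (q m (star (l i))) * star (l j)) * e₁) := by
            rw [map_sum ι, Finset.sum_mul]
            refine Finset.sum_congr rfl fun i _ => ?_
            rw [map_mul ι, mul_assoc, ← hjones]
        _ = ∑ i, star (m * (ι (star (l i)) * e₁ * ι (l i))) * (ι (star (l j)) * e₁) := by
            refine Finset.sum_congr rfl fun i _ => ?_
            have h3 : m * (ι (star (l i)) * e₁ * ι (l i))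
                = ι (q m (star (l i))) * e₁ * ι (l i) := by
              rw [← mul_assoc, ← mul_assoc, hq]
            rw [h3]
            simp only [star_mul, ← map_star ι, hestar, map_mul ι, mul_assoc]
        _ = star (m * ∑ i, ι (star (l i)) * e₁ * ι (l i)) * (ι (star (l j)) * e₁) := by
            rw [Finset.mul_sum, star_sum, Finset.sum_mul]
        _ = (∑ i, ι (star (l i)) * e₁ * ι (l i)) * (star m * (ι (star (l j)) * e₁)) := by
            rw [star_mul, hstaru, mul_assoc]
        _ = (∑ i, ι (star (l i)) * e₁ * ι (l i)) * (ι (q (star m) (star (l j))) * e₁) := by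
            rw [← mul_assoc (star m), hq]
        _ = ι (q (star m) (star (l j))) * e₁ := hL2 _
        _ = star m * ι (star (l j)) * e₁ := (hq _ _).symm
    exact key.symm
  -- the assoc-friendly versions of hsum
  have hsum' : ∑ i, κ (star (l i)) * f * κ (l i) = 1 := by
    rw [← hsum]
    exact Finset.sum_congr rfl fun i _ => by rw [map_star κ]
  have hsum'' : ∑ i, κ (star (l i)) * (f * κ (l i)) = 1 := by
    rw [← hsum']
    exact Finset.sum_congr rfl fun i _ => by rw [mul_assoc]
  -- the homomorphism M₁ → P
  let Φfun : M₁ → P := fun m => ∑ i, κ (q m (star (l i))) * f * κ (l i)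
  have hΦone : Φfun 1 = 1 := by
    show (∑ i, κ (q 1 (star (l i))) * f * κ (l i)) = 1
    simp_rw [hq_one]; exact hsum'
  have hΦzero : Φfun 0 = 0 := by
    show (∑ i, κ (q 0 (star (l i))) * f * κ (l i)) = 0
    simp_rw [hq_zero, map_zero κ, zero_mul, Finset.sum_const_zero]
  have hΦadd : ∀ m m' : M₁, Φfun (m + m') = Φfun m + Φfun m' := by
    intro m m'
    show (∑ i, κ (q (m + m') (star (l i))) * f * κ (l i)) = _
    simp_rw [hq_add, map_add κ, add_mul]
    rw [Finset.sum_add_distrib]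
  have hΦsmul : ∀ (r : ℂ) (m : M₁), Φfun (r • m) = r • Φfun m := by
    intro r m
    show (∑ i, κ (q (r • m) (star (l i))) * f * κ (l i)) = _
    simp_rw [hq_smul, map_smul κ, smul_mul_assoc]
    rw [← Finset.smul_sum]
  have hΦmul : ∀ m m' : M₁, Φfun (m * m') = Φfun m * Φfun m' := by
    intro m m'
    show (∑ j, κ (q (m * m') (star (l j))) * f * κ (l j))
        = (∑ i, κ (q m (star (l i))) * f * κ (l i)) *
          (∑ j, κ (q m' (star (l j))) * f * κ (l j))
    rw [Finset.sum_mul_sum]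
    rw [Finset.sum_comm]
    refine Finset.sum_congr rfl fun j _ => ?_
    have t : ∀ i : Fin n, κ (q m (star (l i))) * f * κ (l i) *
        (κ (q m' (star (l j))) * f * κ (l j))
        = κ (q m (star (l i)) * EN (l i * q m' (star (l j)))) * f * κ (l j) := by
      intro i
      calc κ (q m (star (l i))) * f * κ (l i) * (κ (q m' (star (l j))) * f * κ (l j))
          = κ (q m (star (l i))) * (f * κ (l i * q m' (star (l j))) * f) * κ (l j) := by
            rw [map_mul κ]; simp only [mul_assoc]
        _ = κ (q m (star (l i))) * (κ (EN (l i * q m' (star (l j)))) * f) * κ (l j) := by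
            rw [hfMf]
        _ = κ (q m (star (l i)) * EN (l i * q m' (star (l j)))) * f * κ (l j) := by
            rw [map_mul κ]; simp only [mul_assoc]
    rw [hq_mul]
    calc κ (∑ i, q m (star (l i)) * EN (l i * q m' (star (l j)))) * f * κ (l j)
        = ∑ i, κ (q m (star (l i)) * EN (l i * q m' (star (l j)))) * f * κ (l j) := by
          rw [map_sum κ, Finset.sum_mul, Finset.sum_mul]
      _ = ∑ i, κ (q m (star (l i))) * f * κ (l i) *
            (κ (q m' (star (l j))) * f * κ (l j)) := (Finset.sum_congr rfl fun i _ => (t i).symm)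
  have hΦstar : ∀ m : M₁, Φfun (star m) = star (Φfun m) := by
    intro m
    show (∑ j, κ (q (star m) (star (l j))) * f * κ (l j))
        = star (∑ i, κ (q m (star (l i))) * f * κ (l i))
    rw [star_sum]
    have t1 : ∀ i : Fin n, star (κ (q m (star (l i))) * f * κ (l i))
        = κ (star (l i)) * f * κ (star (q m (star (l i)))) := by
      intro i
      rw [star_mul, star_mul, map_star κ, map_star κ, hfstar]
      simp only [mul_assoc]
    calc ∑ j, κ (q (star m) (star (l j))) * f * κ (l j)
        = ∑ j, ∑ i, κ (star (l i) * EN (star (q m (star (l i))) * star (l j))) * f * κ (l j) := by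
          refine Finset.sum_congr rfl fun j _ => ?_
          rw [hq_star, map_sum κ, Finset.sum_mul, Finset.sum_mul]
      _ = ∑ i, ∑ j, κ (star (l i) * EN (star (q m (star (l i))) * star (l j))) * f * κ (l j) :=
          Finset.sum_comm
      _ = ∑ i, κ (star (l i)) * f * κ (star (q m (star (l i)))) := by
          refine Finset.sum_congr rfl fun i _ => ?_
          calc ∑ j, κ (star (l i) * EN (star (q m (star (l i))) * star (l j))) * f * κ (l j)
              = ∑ j, κ (star (l i)) * f * κ (star (q m (star (l i)))) *
                  (κ (star (l j)) * (f * κ (l j))) := by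
                refine Finset.sum_congr rfl fun j _ => ?_
                rw [map_mul κ, mul_assoc (κ (star (l i))), ← hfMf, map_mul κ]
                simp only [mul_assoc]
            _ = κ (star (l i)) * f * κ (star (q m (star (l i)))) *
                  ∑ j, κ (star (l j)) * (f * κ (l j)) := by rw [Finset.mul_sum]
            _ = κ (star (l i)) * f * κ (star (q m (star (l i)))) := by rw [hsum'', mul_one]
      _ = ∑ i, star (κ (q m (star (l i))) * f * κ (l i)) :=
          (Finset.sum_congr rfl fun i _ => (t1 i).symm)
  have hΦcommutes : ∀ r : ℂ, Φfun (algebraMap ℂ M₁ r) = algebraMap ℂ P r := by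
    intro r
    rw [Algebra.algebraMap_eq_smul_one, hΦsmul, hΦone, Algebra.algebraMap_eq_smul_one]
  let Φ : M₁ →⋆ₐ[ℂ] P :=
    { toFun := Φfun
      map_one' := hΦone
      map_mul' := hΦmul
      map_zero' := hΦzero
      map_add' := hΦadd
      commutes' := hΦcommutes
      map_star' := hΦstar }
  have hΦι : ∀ x : M, Φ (ι x) = κ x := by
    intro x
    show (∑ i, κ (q (ι x) (star (l i))) * f * κ (l i)) = κ x
    calc ∑ i, κ (q (ι x) (star (l i))) * f * κ (l i)
        = ∑ i, κ x * (κ (star (l i)) * f * κ (l i)) := by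
          refine Finset.sum_congr rfl fun i _ => ?_
          rw [hq_ι, map_mul κ]; simp only [mul_assoc]
      _ = κ x * ∑ i, κ (star (l i)) * f * κ (l i) := by rw [Finset.mul_sum]
      _ = κ x := by rw [hsum', mul_one]
  have hΦe : Φ e₁ = f := by
    show (∑ i, κ (q e₁ (star (l i))) * f * κ (l i)) = f
    calc ∑ i, κ (q e₁ (star (l i))) * f * κ (l i)
        = ∑ i, f * (κ (star (l i)) * f * κ (l i)) := by
          refine Finset.sum_congr rfl fun i _ => ?_
          rw [hq_e, ← mul_assoc, ← hfMf]
          simp only [mul_assoc]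
      _ = f * ∑ i, κ (star (l i)) * f * κ (l i) := by rw [Finset.mul_sum]
      _ = f := by rw [hsum', mul_one]
  -- P is nontrivial
  have hP1 : (1 : P) ≠ 0 := by
    intro h
    have h1 : (1 : M) = 0 := hκ (by rw [map_one, map_zero, h])
    have h2 : (1 : M₁) = 0 := by rw [← map_one ι, h1, map_zero ι]
    exact one_ne_zero h2
  -- injectivity from simplicity
  have hinj : Function.Injective Φ := by
    rcases hsimple.simple.eq_bot_or_eq_top (TwoSidedIdeal.ker Φ.toAlgHom.toRingHom) with
      hbot | htop
    · exact (TwoSidedIdeal.ker_eq_bot _).mp hbot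
    · exfalso
      have h1 : (1 : M₁) ∈ TwoSidedIdeal.ker Φ.toAlgHom.toRingHom := by
        rw [htop]; exact TwoSidedIdeal.mem_top _
      have h2 : Φ (1 : M₁) = 0 := (TwoSidedIdeal.mem_ker _).mp h1
      rw [map_one] at h2
      exact hP1 h2
  -- surjectivity from the basis of P over M
  have hsurj : Function.Surjective Φ := by
    intro z
    refine ⟨∑ i, ((((Real.sqrt τ)⁻¹ : ℝ) : ℂ) •
      (ι (EPM (z * star (((((Real.sqrt τ)⁻¹ : ℝ) : ℂ)) • (f * κ (l i))))) *
        (e₁ * ι (l i)))), ?_⟩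
    rw [map_sum Φ]
    conv_rhs => rw [hPbasis z]
    refine Finset.sum_congr rfl fun i _ => ?_
    rw [map_smul Φ, map_mul Φ, map_mul Φ, hΦι, hΦe, hΦι, mul_smul_comm]
  exact ⟨StarAlgEquiv.ofBijective Φ ⟨hinj, hsurj⟩, fun x => hΦι x, hΦe⟩
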